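/- Let E and D be open ellipsoids in ℝⁿ with n ≥ 2, whose boundaries do not intersect transversally at any point (i.e., at any common boundary point, the gradients of the defining quadratic functions are linearly dependent). If E ∩ D is nonempty, then either E ⊆ D or D ⊆ E. -/

import Mathlib

open Matrix

section
variable {n : ℕ}

lemma posdef_pos {A : Matrix (Fin n) (Fin n) ℝ} (hA : A.PosDef) {x : Fin n → ℝ} (hx : x ≠ 0) :
    0 < x ⬝ᵥ A.mulVec x := by
  have := hA.re_dotProduct_pos hx
  simpa using this

lemma posdef_nonneg {A : Matrix (Fin n) (Fin n) ℝ} (hA : A.PosDef) (x : Fin n → ℝ) :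
    0 ≤ x ⬝ᵥ A.mulVec x := by
  rcases eq_or_ne x 0 with h | h
  · simp [h]
  · exact (posdef_pos hA h).le

lemma posdef_symm {A : Matrix (Fin n) (Fin n) ℝ} (hA : A.PosDef) : Aᵀ = A := by
  have := hA.1.eq
  rwa [conjTranspose_eq_transpose_of_trivial] at this

lemma dps {A : Matrix (Fin n) (Fin n) ℝ} (hA : Aᵀ = A) (x y : Fin n → ℝ) :
    x ⬝ᵥ A.mulVec y = y ⬝ᵥ A.mulVec x := by
  rw [dotProduct_mulVec, ← mulVec_transpose, hA, dotProduct_comm]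

lemma quad_eval {A : Matrix (Fin n) (Fin n) ℝ} (hA : Aᵀ = A) (b : Fin n → ℝ) (c : ℝ)
    (x y : Fin n → ℝ) :
    y ⬝ᵥ A.mulVec y + b ⬝ᵥ y + c = (x ⬝ᵥ A.mulVec x + b ⬝ᵥ x + c)
      + ((2:ℝ) • A.mulVec x + b) ⬝ᵥ (y - x) + (y - x) ⬝ᵥ A.mulVec (y - x) := by
  have h1 := dps hA x y
  have h2 := dotProduct_comm (A.mulVec x) y
  have h3 := dotProduct_comm (A.mulVec x) x
  simp only [mulVec_sub, dotProduct_sub, sub_dotProduct, add_dotProduct, dotProduct_add,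
    smul_dotProduct, smul_eq_mul]
  ring_nf
  linear_combination h1 + 2*h3 - 2*h2

lemma line_eval {A : Matrix (Fin n) (Fin n) ℝ} (hA : Aᵀ = A) (b : Fin n → ℝ) (c : ℝ)
    (x d : Fin n → ℝ) (t : ℝ) :
    (x + t • d) ⬝ᵥ A.mulVec (x + t • d) + b ⬝ᵥ (x + t • d) + c
      = (x ⬝ᵥ A.mulVec x + b ⬝ᵥ x + c) + t * (((2:ℝ) • A.mulVec x + b) ⬝ᵥ d)
        + t^2 * (d ⬝ᵥ A.mulVec d) := by
  rw [quad_eval hA b c x (x + t • d)]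
  simp only [add_sub_cancel_left, mulVec_smul, dotProduct_smul, smul_dotProduct, smul_eq_mul]
  ring

lemma qexp2 {M : Matrix (Fin n) (Fin n) ℝ} (hM : Mᵀ = M) (a b : ℝ) (x y : Fin n → ℝ) :
    (a • x + b • y) ⬝ᵥ M.mulVec (a • x + b • y)
      = a^2 * (x ⬝ᵥ M.mulVec x) + 2*a*b * (x ⬝ᵥ M.mulVec y) + b^2 * (y ⬝ᵥ M.mulVec y) := by
  have h1 := dps hM y x
  simp only [mulVec_add, mulVec_smul, dotProduct_add, add_dotProduct, dotProduct_smul,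
    smul_dotProduct, smul_eq_mul]
  linear_combination a*b*h1

lemma qexp3 {M : Matrix (Fin n) (Fin n) ℝ} (hM : Mᵀ = M) (a b : ℝ) (x y z : Fin n → ℝ) :
    (a • x + b • y + z) ⬝ᵥ M.mulVec (a • x + b • y + z)
      = a^2 * (x ⬝ᵥ M.mulVec x) + b^2 * (y ⬝ᵥ M.mulVec y) + (z ⬝ᵥ M.mulVec z)
        + 2*a*b * (x ⬝ᵥ M.mulVec y) + 2*a * (x ⬝ᵥ M.mulVec z) + 2*b * (y ⬝ᵥ M.mulVec z) := by
  have h1 := dps hM y x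
  have h2 := dps hM z x
  have h3 := dps hM z y
  simp only [mulVec_add, mulVec_smul, dotProduct_add, add_dotProduct, dotProduct_smul,
    smul_dotProduct, smul_eq_mul]
  linear_combination a*b*h1 + a*h2 + b*h3

end
section
variable {n : ℕ}

lemma grad_ne {A : Matrix (Fin n) (Fin n) ℝ} (hA : A.PosDef) (b : Fin n → ℝ) (c : ℝ)
    {x0 p : Fin n → ℝ} (hx0 : x0 ⬝ᵥ A.mulVec x0 + b ⬝ᵥ x0 + c < 0)
    (hp : p ⬝ᵥ A.mulVec p + b ⬝ᵥ p + c = 0) : (2:ℝ) • A.mulVec p + b ≠ 0 := by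
  intro h
  have e := quad_eval (posdef_symm hA) b c p x0
  rw [hp, h] at e
  have := posdef_nonneg hA (x0 - p)
  simp [zero_dotProduct] at e
  rw [sub_dotProduct] at this
  linarith

lemma cubic_zero (C3 C2 C1 C0 : ℝ)
    (h : ∀ a : ℝ, C3*a^3 + C2*a^2 + C1*a + C0 = 0) : C3 = 0 := by
  have h0 := h 0; have h1 := h 1; have h2 := h 2; have h3 := h 3
  linear_combination (-1/6)*h0 + (1/2)*h1 - (1/2)*h2 + (1/6)*h3

lemma key_identity {A1 A2 : Matrix (Fin n) (Fin n) ℝ} (h1 : A1ᵀ = A1) (h2 : A2ᵀ = A2)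
    (b1 b2 : Fin n → ℝ) (c1 c2 : ℝ) (w : Fin n → ℝ) (l : ℝ)
    (hw1 : w ⬝ᵥ A1.mulVec w + b1 ⬝ᵥ w + c1 = 0)
    (hw2 : w ⬝ᵥ A2.mulVec w + b2 ⬝ᵥ w + c2 = 0)
    (hg : (2:ℝ) • A1.mulVec w + b1 = l • ((2:ℝ) • A2.mulVec w + b2)) (x : Fin n → ℝ) :
    (x ⬝ᵥ A1.mulVec x + b1 ⬝ᵥ x + c1) - l * (x ⬝ᵥ A2.mulVec x + b2 ⬝ᵥ x + c2)
      = (x - w) ⬝ᵥ (A1 - l • A2).mulVec (x - w) := by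
  have e1 := quad_eval h1 b1 c1 w x
  have e2 := quad_eval h2 b2 c2 w x
  rw [hw1] at e1; rw [hw2] at e2
  have hg' : ((2:ℝ) • A1.mulVec w + b1) ⬝ᵥ (x - w)
      = l * (((2:ℝ) • A2.mulVec w + b2) ⬝ᵥ (x - w)) := by
    rw [hg, smul_dotProduct]; simp [smul_eq_mul]
  have hrhs : (x - w) ⬝ᵥ (A1 - l • A2).mulVec (x - w)
      = (x - w) ⬝ᵥ A1.mulVec (x - w) - l * ((x - w) ⬝ᵥ A2.mulVec (x - w)) := by
    rw [sub_mulVec, smul_mulVec, dotProduct_sub, dotProduct_smul]; simp [smul_eq_mul]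
  rw [hrhs]
  linear_combination e1 - l*e2 + hg'

lemma find_t0 {M : Matrix (Fin n) (Fin n) ℝ} (hM : Mᵀ = M) {up um hv : Fin n → ℝ}
    (hup : 0 < up ⬝ᵥ M.mulVec up) (hum : um ⬝ᵥ M.mulVec um < 0) (hhv : hv ≠ 0) :
    ∃ t : Fin n → ℝ, t ⬝ᵥ M.mulVec t = 0 ∧ M.mulVec t ≠ 0 ∧ hv ⬝ᵥ t ≠ 0 := by
  set qp := up ⬝ᵥ M.mulVec up with hqp
  set qm := um ⬝ᵥ M.mulVec um with hqm
  set m := up ⬝ᵥ M.mulVec um with hm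
  have hDd : 0 < m^2 - qp*qm := by nlinarith [sq_nonneg m]
  set Dd := m^2 - qp*qm with hDdd
  set sd := Real.sqrt Dd with hsdd
  have hsd : sd^2 = m^2 - qp*qm := Real.sq_sqrt hDd.le
  set a1 := (-m + sd)/qp with ha1
  set a2 := (-m - sd)/qp with ha2
  set t1 := a1 • up + (1:ℝ) • um with ht1
  set t2 := a2 • up + (1:ℝ) • um with ht2
  have hq1 : t1 ⬝ᵥ M.mulVec t1 = 0 := by
    rw [ht1, qexp2 hM, ha1, ← hqp, ← hqm, ← hm]
    field_simp [hup.ne']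
    linear_combination hsd
  have hq2 : t2 ⬝ᵥ M.mulVec t2 = 0 := by
    rw [ht2, qexp2 hM, ha2, ← hqp, ← hqm, ← hm]
    field_simp [hup.ne']
    linear_combination hsd
  have hcc : t1 ⬝ᵥ M.mulVec t2 = -2*Dd/qp := by
    have hsym := dps hM um up
    rw [ht1, ht2]
    simp only [mulVec_add, mulVec_smul, dotProduct_add, add_dotProduct, dotProduct_smul,
      smul_dotProduct, smul_eq_mul, one_mul]
    rw [hsym]
    rw [ha1, ha2, ← hqp, ← hqm, ← hm]
    field_simp [hup.ne']
    linear_combination (-1 : ℝ) * hsd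
  have hccne : t1 ⬝ᵥ M.mulVec t2 ≠ 0 := by
    rw [hcc]
    have : (-2)*Dd/qp < 0 := div_neg_of_neg_of_pos (by linarith) hup
    intro hz
    rw [show (-2 : ℝ)*Dd/qp = -2*Dd/qp by ring] at this
    linarith
  have hMt1 : M.mulVec t1 ≠ 0 := by
    intro h
    apply hccne
    rw [dps hM t1 t2, h, dotProduct_zero]
  have hMt2 : M.mulVec t2 ≠ 0 := by
    intro h
    apply hccne
    rw [h, dotProduct_zero]
  by_cases hh1 : hv ⬝ᵥ t1 ≠ 0
  · exact ⟨t1, hq1, hMt1, hh1⟩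
  by_cases hh2 : hv ⬝ᵥ t2 ≠ 0
  · exact ⟨t2, hq2, hMt2, hh2⟩
  push_neg at hh1 hh2
  -- now hv is M-orthogonal... build three-term combination
  set cc := t1 ⬝ᵥ M.mulVec t2 with hccdef
  set m1 := t1 ⬝ᵥ M.mulVec hv with hm1
  set m2 := t2 ⬝ᵥ M.mulVec hv with hm2
  set ee := hv ⬝ᵥ M.mulVec hv with hee
  obtain ⟨i, hK1i⟩ : ∃ i, M.mulVec t1 i ≠ 0 := by
    by_contra hno
    push_neg at hno
    exact hMt1 (funext fun i => hno i)
  set K1i := M.mulVec t1 i with hK1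
  set K2i := M.mulVec t2 i with hK2
  set Khi := M.mulVec hv i with hKh
  have hex : ∃ a : ℝ, (2*a*cc + 2*m2) ≠ 0 ∧
      ((2*a*cc + 2*m2)*(a*K1i + Khi) - (2*a*m1 + ee)*K2i) ≠ 0 := by
    by_contra hno
    push_neg at hno
    have hF : ∀ a : ℝ, (2*a*cc+2*m2)*((2*a*cc+2*m2)*(a*K1i+Khi) - (2*a*m1+ee)*K2i) = 0 := by
      intro a
      rcases eq_or_ne (2*a*cc+2*m2) 0 with h | h
      · rw [h, zero_mul]
      · rw [hno a h, mul_zero]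
    have hC3 : 4*cc^2*K1i = 0 := by
      have e0 := hF 0; have e1 := hF 1; have e2 := hF 2; have e3 := hF 3
      linear_combination (-1/6)*e0 + (1/2)*e1 - (1/2)*e2 + (1/6)*e3
    have h4 : (4:ℝ)*cc^2 ≠ 0 := by positivity
    rcases mul_eq_zero.mp hC3 with h | h
    · exact h4 h
    · exact hK1i h
  obtain ⟨a, hDa, hGa⟩ := hex
  set bb := -(2*a*m1 + ee)/(2*a*cc + 2*m2) with hbb
  refine ⟨a • t1 + bb • t2 + hv, ?_, ?_, ?_⟩
  · rw [qexp3 hM]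
    rw [hq1, hq2, ← hccdef, ← hm1, ← hm2, ← hee, hbb]
    have hY' : a*cc + m2 ≠ 0 := by intro h; apply hDa; linear_combination 2*h
    field_simp
    ring
  · intro h
    apply hGa
    have hcoord : (M.mulVec (a • t1 + bb • t2 + hv)) i = a*K1i + bb*K2i + Khi := by
      simp [mulVec_add, mulVec_smul, hK1, hK2, hKh]
    rw [h] at hcoord
    simp only [Pi.zero_apply] at hcoord
    have : a*K1i + bb*K2i + Khi = 0 := hcoord.symm
    have hY : (2*a*cc+2*m2) * bb = -(2*a*m1+ee) := by
      rw [hbb, mul_div_assoc', mul_div_cancel_left₀ _ hDa]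
    linear_combination (2*a*cc+2*m2) * this - K2i * hY
  · simp only [dotProduct_add, dotProduct_smul, hh1, hh2, smul_eq_mul, mul_zero, zero_add, add_zero]
    rw [dotProduct_comm]
    intro h
    exact hhv (dotProduct_self_eq_zero.mp h)
end
section
variable {n : ℕ}

lemma tangent_l {A1 A2 : Matrix (Fin n) (Fin n) ℝ} (hA1 : A1.PosDef) (hA2 : A2.PosDef)
    (b1 b2 : Fin n → ℝ) (c1 c2 : ℝ) {p xc : Fin n → ℝ}
    (hp1 : p ⬝ᵥ A1.mulVec p + b1 ⬝ᵥ p + c1 = 0)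
    (hp2 : p ⬝ᵥ A2.mulVec p + b2 ⬝ᵥ p + c2 = 0)
    (hc1 : xc ⬝ᵥ A1.mulVec xc + b1 ⬝ᵥ xc + c1 < 0)
    (hc2 : xc ⬝ᵥ A2.mulVec xc + b2 ⬝ᵥ xc + c2 < 0)
    (hdep : ¬ LinearIndependent ℝ ![(2:ℝ) • A1.mulVec p + b1, (2:ℝ) • A2.mulVec p + b2]) :
    ∃ l : ℝ, 0 < l ∧ (2:ℝ) • A1.mulVec p + b1 = l • ((2:ℝ) • A2.mulVec p + b2) := by
  have hgP : (2:ℝ) • A1.mulVec p + b1 ≠ 0 := grad_ne hA1 b1 c1 hc1 hp1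
  have hgQ : (2:ℝ) • A2.mulVec p + b2 ≠ 0 := grad_ne hA2 b2 c2 hc2 hp2
  rw [linearIndependent_fin2] at hdep
  push_neg at hdep
  obtain ⟨a, ha⟩ := hdep hgQ
  have hane : a ≠ 0 := by
    intro h
    rw [h, zero_smul] at ha
    exact hgP ha.symm
  have e1 := quad_eval (posdef_symm hA1) b1 c1 p xc
  have e2 := quad_eval (posdef_symm hA2) b2 c2 p xc
  rw [hp1] at e1; rw [hp2] at e2
  have q1 := posdef_nonneg hA1 (xc - p)
  have q2 := posdef_nonneg hA2 (xc - p)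
  have hgPd : ((2:ℝ) • A1.mulVec p + b1) ⬝ᵥ (xc - p) < 0 := by linarith
  have hgQd : ((2:ℝ) • A2.mulVec p + b2) ⬝ᵥ (xc - p) < 0 := by linarith
  have hrel : ((2:ℝ) • A1.mulVec p + b1) ⬝ᵥ (xc - p)
      = a * (((2:ℝ) • A2.mulVec p + b2) ⬝ᵥ (xc - p)) := by
    rw [show ((2:ℝ) • A1.mulVec p + b1) = a • ((2:ℝ) • A2.mulVec p + b2) from ha.symm,
      smul_dotProduct, smul_eq_mul]
  have hapos : 0 < a := by nlinarith
  exact ⟨a, hapos, ha.symm⟩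

lemma exists_edge_point {A B : Matrix (Fin n) (Fin n) ℝ} (hA : A.PosDef) (hB : B.PosDef)
    (u v : Fin n → ℝ) (r s : ℝ) {xc xa : Fin n → ℝ}
    (h1 : xc ⬝ᵥ A.mulVec xc + u ⬝ᵥ xc + r < 0)
    (h2 : xc ⬝ᵥ B.mulVec xc + v ⬝ᵥ xc + s < 0)
    (h3 : xa ⬝ᵥ A.mulVec xa + u ⬝ᵥ xa + r < 0)
    (h4 : 0 ≤ xa ⬝ᵥ B.mulVec xa + v ⬝ᵥ xa + s) :
    ∃ x, x ⬝ᵥ B.mulVec x + v ⬝ᵥ x + s = 0 ∧ x ⬝ᵥ A.mulVec x + u ⬝ᵥ x + r < 0 := by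
  have hd : xa - xc ≠ 0 := by
    intro h
    rw [sub_eq_zero] at h
    rw [h] at h4
    linarith
  obtain ⟨d, hdd⟩ : ∃ d, d = xa - xc := ⟨_, rfl⟩
  rw [← hdd] at hd
  obtain ⟨al, hal⟩ : ∃ z, z = d ⬝ᵥ B.mulVec d := ⟨_, rfl⟩
  obtain ⟨be, hbe⟩ : ∃ z, z = ((2:ℝ) • B.mulVec xc + v) ⬝ᵥ d := ⟨_, rfl⟩
  obtain ⟨ga, hga⟩ : ∃ z, z = xc ⬝ᵥ B.mulVec xc + v ⬝ᵥ xc + s := ⟨_, rfl⟩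
  have halpos : 0 < al := hal ▸ posdef_pos hB hd
  have hQline : ∀ t : ℝ, (xc + t • d) ⬝ᵥ B.mulVec (xc + t • d) + v ⬝ᵥ (xc + t • d) + s
      = ga + t * be + t^2 * al := by
    intro t
    rw [line_eval (posdef_symm hB) v s xc d t, ← hal, ← hbe, ← hga]
  have hxa : xc + (1:ℝ) • d = xa := by rw [hdd]; module
  have hf1 : 0 ≤ ga + be + al := by
    have := hQline 1
    rw [hxa] at this
    rw [this] at h4
    nlinarith [h4]
  have hganeg : ga < 0 := hga ▸ h2
  have hdiscpos : 0 < be^2 - 4*al*ga := by nlinarith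
  obtain ⟨sd, hsd0⟩ : ∃ z, z = Real.sqrt (be^2 - 4*al*ga) := ⟨_, rfl⟩
  have hsd : sd^2 = be^2 - 4*al*ga := by rw [hsd0]; exact Real.sq_sqrt hdiscpos.le
  have hsdnn : 0 ≤ sd := hsd0 ▸ Real.sqrt_nonneg _
  obtain ⟨tt, htt⟩ : ∃ z, z = (-be + sd)/(2*al) := ⟨_, rfl⟩
  have hroot : ga + tt*be + tt^2*al = 0 := by
    rw [htt]
    field_simp
    linear_combination hsd
  have httpos : 0 < tt := by
    rw [htt]
    apply div_pos _ (by linarith)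
    nlinarith
  have htle : tt ≤ 1 := by
    have h2ab : 0 ≤ 2*al + be := by nlinarith
    have : sd ≤ 2*al + be := by nlinarith
    rw [htt, div_le_one (by linarith)]
    linarith
  refine ⟨xc + tt • d, ?_, ?_⟩
  · rw [hQline tt]
    exact hroot
  · have hP := line_eval (posdef_symm hA) u r xc d tt
    have hPa := line_eval (posdef_symm hA) u r xc d 1
    rw [hxa] at hPa
    have hq := posdef_nonneg hA d
    have e3 : (xc + tt • d) ⬝ᵥ A.mulVec (xc + tt • d) + u ⬝ᵥ (xc + tt • d) + r
        = (1-tt) * (xc ⬝ᵥ A.mulVec xc + u ⬝ᵥ xc + r)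
          + tt * (xa ⬝ᵥ A.mulVec xa + u ⬝ᵥ xa + r)
          + (tt^2 - tt) * (d ⬝ᵥ A.mulVec d) := by
      linear_combination hP - tt * hPa
    have g1 : 0 ≤ 1 - tt := by linarith
    have g2 : (1-tt) * (xc ⬝ᵥ A.mulVec xc + u ⬝ᵥ xc + r) ≤ 0 :=
      mul_nonpos_of_nonneg_of_nonpos g1 h1.le
    have g3 : tt * (xa ⬝ᵥ A.mulVec xa + u ⬝ᵥ xa + r) < 0 :=
      mul_neg_of_pos_of_neg httpos h3
    have g4 : (tt^2 - tt) * (d ⬝ᵥ A.mulVec d) ≤ 0 :=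
      mul_nonpos_of_nonpos_of_nonneg (by nlinarith) hq
    linarith [e3, g2, g3, g4]
end
section
variable {n : ℕ}

lemma exists_outer_point {A B : Matrix (Fin n) (Fin n) ℝ} (hA : A.PosDef) (hB : B.PosDef)
    (u v : Fin n → ℝ) (r s : ℝ) {o xb : Fin n → ℝ} (hn : 0 < n)
    (ho : (2:ℝ) • B.mulVec o + v = 0)
    (hb1 : xb ⬝ᵥ B.mulVec xb + v ⬝ᵥ xb + s < 0)
    (hb2 : 0 ≤ xb ⬝ᵥ A.mulVec xb + u ⬝ᵥ xb + r) :
    ∃ z, z ⬝ᵥ B.mulVec z + v ⬝ᵥ z + s = 0 ∧ 0 ≤ z ⬝ᵥ A.mulVec z + u ⬝ᵥ z + r := by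
  have hQline : ∀ (d : Fin n → ℝ) (t : ℝ),
      (o + t • d) ⬝ᵥ B.mulVec (o + t • d) + v ⬝ᵥ (o + t • d) + s
        = (o ⬝ᵥ B.mulVec o + v ⬝ᵥ o + s) + t^2 * (d ⬝ᵥ B.mulVec d) := by
    intro d t
    rw [line_eval (posdef_symm hB) v s o d t, ho, zero_dotProduct]
    ring
  have hPline := fun (d : Fin n → ℝ) (t : ℝ) => line_eval (posdef_symm hA) u r o d t
  rcases eq_or_ne xb o with heq | hne
  · -- xb = o
    subst heq
    set d : Fin n → ℝ := Pi.single ⟨0, hn⟩ 1 with hdd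
    have hd : d ≠ 0 := by
      intro h
      have := congrFun h ⟨0, hn⟩
      simp [hdd, Pi.single_eq_same] at this
    have hrho : 0 < d ⬝ᵥ B.mulVec d := posdef_pos hB hd
    obtain ⟨s0, hs0⟩ : ∃ z, z = Real.sqrt (-(xb ⬝ᵥ B.mulVec xb + v ⬝ᵥ xb + s)/(d ⬝ᵥ B.mulVec d)) := ⟨_, rfl⟩
    have hs0nn : 0 ≤ s0 := hs0 ▸ Real.sqrt_nonneg _
    have hs0sq : s0^2 = -(xb ⬝ᵥ B.mulVec xb + v ⬝ᵥ xb + s)/(d ⬝ᵥ B.mulVec d) := by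
      rw [hs0]; exact Real.sq_sqrt (div_nonneg (by linarith) hrho.le)
    have hQz : ∀ sg : ℝ, sg^2 = s0^2 →
        (xb + sg • d) ⬝ᵥ B.mulVec (xb + sg • d) + v ⬝ᵥ (xb + sg • d) + s = 0 := by
      intro sg hsg
      rw [hQline d sg, hsg, hs0sq]
      field_simp
      ring
    rcases le_or_gt 0 (((2:ℝ) • A.mulVec xb + u) ⬝ᵥ d) with hbeta | hbeta
    · refine ⟨xb + s0 • d, hQz s0 rfl, ?_⟩
      rw [hPline d s0]
      have := posdef_nonneg hA d
      nlinarith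
    · refine ⟨xb + (-s0) • d, hQz (-s0) (by ring), ?_⟩
      rw [hPline d (-s0)]
      have := posdef_nonneg hA d
      nlinarith
  · -- xb ≠ o
    set d : Fin n → ℝ := xb - o with hdd
    have hd : d ≠ 0 := sub_ne_zero.mpr hne
    have hrho : 0 < d ⬝ᵥ B.mulVec d := posdef_pos hB hd
    have hxb : o + (1:ℝ) • d = xb := by rw [hdd]; module
    have hQxb := hQline d 1
    rw [hxb] at hQxb
    have hQo : o ⬝ᵥ B.mulVec o + v ⬝ᵥ o + s < 0 := by nlinarith
    obtain ⟨s0, hs0⟩ : ∃ z, z = Real.sqrt (-(o ⬝ᵥ B.mulVec o + v ⬝ᵥ o + s)/(d ⬝ᵥ B.mulVec d)) := ⟨_, rfl⟩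
    have hs0nn : 0 ≤ s0 := hs0 ▸ Real.sqrt_nonneg _
    have hs0sq : s0^2 = -(o ⬝ᵥ B.mulVec o + v ⬝ᵥ o + s)/(d ⬝ᵥ B.mulVec d) := by
      rw [hs0]; exact Real.sq_sqrt (div_nonneg (by linarith) hrho.le)
    have hs0sq1 : 1 ≤ s0^2 := by
      rw [hs0sq, le_div_iff₀ hrho]
      nlinarith
    have hs01 : 1 ≤ s0 := by nlinarith
    have hQz : ∀ sg : ℝ, sg^2 = s0^2 →
        (o + sg • d) ⬝ᵥ B.mulVec (o + sg • d) + v ⬝ᵥ (o + sg • d) + s = 0 := by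
      intro sg hsg
      rw [hQline d sg, hsg, hs0sq]
      field_simp
      ring
    have hPxb := hPline d 1
    rw [hxb] at hPxb
    have hq := posdef_nonneg hA d
    rcases le_or_gt 0 (((2:ℝ) • A.mulVec o + u) ⬝ᵥ d) with hbeta | hbeta
    · refine ⟨o + s0 • d, hQz s0 rfl, ?_⟩
      rw [hPline d s0]
      nlinarith
    · refine ⟨o + (-s0) • d, hQz (-s0) (by ring), ?_⟩
      rw [hPline d (-s0)]
      nlinarith
end
section
variable {n : ℕ}

lemma exists_common_zero {A B : Matrix (Fin n) (Fin n) ℝ} (hA : A.PosDef) (hB : B.PosDef)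
    (u v : Fin n → ℝ) (r s : ℝ) (hn : 2 ≤ n) {o x z : Fin n → ℝ}
    (ho : (2:ℝ) • B.mulVec o + v = 0)
    (hoQ : o ⬝ᵥ B.mulVec o + v ⬝ᵥ o + s < 0)
    (hx2 : x ⬝ᵥ B.mulVec x + v ⬝ᵥ x + s = 0)
    (hx1 : x ⬝ᵥ A.mulVec x + u ⬝ᵥ x + r < 0)
    (hz2 : z ⬝ᵥ B.mulVec z + v ⬝ᵥ z + s = 0)
    (hz1 : 0 ≤ z ⬝ᵥ A.mulVec z + u ⬝ᵥ z + r) :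
    ∃ w, (w ⬝ᵥ A.mulVec w + u ⬝ᵥ w + r = 0) ∧ (w ⬝ᵥ B.mulVec w + v ⬝ᵥ w + s = 0) := by
  have hsA := posdef_symm hA
  have hsB := posdef_symm hB
  obtain ⟨rr, hrr⟩ : ∃ c : ℝ, c = -(o ⬝ᵥ B.mulVec o + v ⬝ᵥ o + s) := ⟨_, rfl⟩
  have hrrpos : 0 < rr := by rw [hrr]; linarith
  set uu := x - o with huud
  set vv := z - o with hvvd
  have hquad : ∀ y : Fin n → ℝ, y ⬝ᵥ B.mulVec y + v ⬝ᵥ y + s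
      = (o ⬝ᵥ B.mulVec o + v ⬝ᵥ o + s) + (y - o) ⬝ᵥ B.mulVec (y - o) := by
    intro y
    rw [quad_eval hsB v s o y, ho, zero_dotProduct]
    ring
  have huu : uu ⬝ᵥ B.mulVec uu = rr := by
    have h' := hquad x
    rw [hx2] at h'
    rw [hrr, huud]
    linarith
  have hvv : vv ⬝ᵥ B.mulVec vv = rr := by
    have h' := hquad z
    rw [hz2] at h'
    rw [hrr, hvvd]
    linarith
  have huune : uu ≠ 0 := by
    intro h
    rw [h] at huu
    simp at huu
    linarith [huu ▸ hrrpos]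
  -- inner IVT step
  have ivt : ∀ (ut : Fin n → ℝ) (θz : ℝ), ut ⬝ᵥ B.mulVec ut = rr → uu ⬝ᵥ B.mulVec ut = 0 →
      0 ≤ θz → o + Real.cos θz • uu + Real.sin θz • ut = z →
      ∃ w, (w ⬝ᵥ A.mulVec w + u ⬝ᵥ w + r = 0) ∧ (w ⬝ᵥ B.mulVec w + v ⬝ᵥ w + s = 0) := by
    intro ut θz hut1 hut2 hθz hgz
    have hQpath : ∀ θ : ℝ, (o + Real.cos θ • uu + Real.sin θ • ut) ⬝ᵥ
        B.mulVec (o + Real.cos θ • uu + Real.sin θ • ut)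
        + v ⬝ᵥ (o + Real.cos θ • uu + Real.sin θ • ut) + s = 0 := by
      intro θ
      have h1 : o + Real.cos θ • uu + Real.sin θ • ut
          = o + (Real.cos θ • uu + Real.sin θ • ut) := by module
      rw [h1, hquad, add_sub_cancel_left, qexp2 hsB, hut1, hut2, huu]
      have := Real.sin_sq_add_cos_sq θ
      rw [hrr]
      nlinarith [this]
    have hPform : ∀ θ : ℝ, (o + Real.cos θ • uu + Real.sin θ • ut) ⬝ᵥ
        A.mulVec (o + Real.cos θ • uu + Real.sin θ • ut)
        + u ⬝ᵥ (o + Real.cos θ • uu + Real.sin θ • ut) + r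
        = (o ⬝ᵥ A.mulVec o + u ⬝ᵥ o + r)
          + Real.cos θ * (((2:ℝ) • A.mulVec o + u) ⬝ᵥ uu)
          + Real.sin θ * (((2:ℝ) • A.mulVec o + u) ⬝ᵥ ut)
          + (Real.cos θ)^2 * (uu ⬝ᵥ A.mulVec uu)
          + 2 * Real.cos θ * Real.sin θ * (uu ⬝ᵥ A.mulVec ut)
          + (Real.sin θ)^2 * (ut ⬝ᵥ A.mulVec ut) := by
      intro θ
      have h1 : o + Real.cos θ • uu + Real.sin θ • ut
          = o + (Real.cos θ • uu + Real.sin θ • ut) := by module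
      rw [h1, quad_eval hsA u r o, add_sub_cancel_left, qexp2 hsA]
      simp only [dotProduct_add, dotProduct_smul, smul_eq_mul]
      ring
    set f : ℝ → ℝ := fun θ => (o + Real.cos θ • uu + Real.sin θ • ut) ⬝ᵥ
        A.mulVec (o + Real.cos θ • uu + Real.sin θ • ut)
        + u ⬝ᵥ (o + Real.cos θ • uu + Real.sin θ • ut) + r with hf
    have hcont : Continuous f := by
      have : f = fun θ => (o ⬝ᵥ A.mulVec o + u ⬝ᵥ o + r)
          + Real.cos θ * (((2:ℝ) • A.mulVec o + u) ⬝ᵥ uu)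
          + Real.sin θ * (((2:ℝ) • A.mulVec o + u) ⬝ᵥ ut)
          + (Real.cos θ)^2 * (uu ⬝ᵥ A.mulVec uu)
          + 2 * Real.cos θ * Real.sin θ * (uu ⬝ᵥ A.mulVec ut)
          + (Real.sin θ)^2 * (ut ⬝ᵥ A.mulVec ut) := funext hPform
      rw [this]
      fun_prop
    have hγ0 : o + Real.cos 0 • uu + Real.sin 0 • ut = x := by
      rw [Real.cos_zero, Real.sin_zero, one_smul, zero_smul, add_zero, huud]
      abel
    have hf0 : f 0 < 0 := by
      rw [hf]
      simp only []
      rw [hγ0]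
      exact hx1
    have hfz : 0 ≤ f θz := by
      rw [hf]
      simp only []
      rw [hgz]
      exact hz1
    have hsub := intermediate_value_Icc hθz hcont.continuousOn
    have h0mem : (0:ℝ) ∈ Set.Icc (f 0) (f θz) := ⟨hf0.le, hfz⟩
    obtain ⟨θw, _, hθw⟩ := hsub h0mem
    exact ⟨o + Real.cos θw • uu + Real.sin θw • ut, hθw, hQpath θw⟩
  -- construct ut and θz
  obtain ⟨mm, hmm⟩ : ∃ c : ℝ, c = (uu ⬝ᵥ B.mulVec vv)/rr := ⟨_, rfl⟩
  set up' : Fin n → ℝ := vv - mm • uu with hupd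
  have huv' : uu ⬝ᵥ B.mulVec up' = 0 := by
    rw [hupd]
    simp only [mulVec_sub, mulVec_smul, dotProduct_sub, dotProduct_smul, smul_eq_mul]
    rw [huu, hmm]
    field_simp
    ring
  have hvvdec : vv = mm • uu + up' := by rw [hupd]; module
  by_cases hup0 : up' = 0
  · -- vv = mm • uu with mm = ±1
    have hvmm : vv = mm • uu := by rw [hvvdec, hup0]; module
    have hm2 : mm^2 = 1 := by
      have : vv ⬝ᵥ B.mulVec vv = mm^2 * (uu ⬝ᵥ B.mulVec uu) := by
        rw [hvmm]
        simp only [mulVec_smul, dotProduct_smul, smul_dotProduct, smul_eq_mul]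
        ring
      rw [hvv, huu] at this
      have : rr * (mm^2 - 1) = 0 := by linarith
      rcases mul_eq_zero.mp this with h | h
      · linarith
      · linarith
    rcases mul_self_eq_one_iff.mp (by nlinarith : mm * mm = 1) with h | h
    · -- mm = 1 : z = x, contradiction
      exfalso
      have hvu : vv = uu := by rw [hvmm, h, one_smul]
      have hzx : z = x := by
        have h2 : z - o = x - o := by rw [← hvvd, ← huud, hvu]
        have := sub_left_injective h2
        exact this
      rw [hzx] at hz1
      linarith
    · -- mm = -1 : antipodal case
      have i0 : Fin n := ⟨0, by omega⟩
      have horth : ∀ e : Fin n → ℝ,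
          uu ⬝ᵥ B.mulVec (e - ((uu ⬝ᵥ B.mulVec e)/rr) • uu) = 0 := by
        intro e
        simp only [mulVec_sub, mulVec_smul, dotProduct_sub, dotProduct_smul, smul_eq_mul]
        rw [huu]
        field_simp
        ring
      obtain ⟨cand, hcne, hcorth⟩ : ∃ cand : Fin n → ℝ, cand ≠ 0 ∧ uu ⬝ᵥ B.mulVec cand = 0 := by
        set e0 : Fin n → ℝ := Pi.single ⟨0, by omega⟩ (1:ℝ) with he0
        set e1 : Fin n → ℝ := Pi.single ⟨1, by omega⟩ (1:ℝ) with he1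
        set c0 : Fin n → ℝ := e0 - ((uu ⬝ᵥ B.mulVec e0)/rr) • uu with hc0
        set c1 : Fin n → ℝ := e1 - ((uu ⬝ᵥ B.mulVec e1)/rr) • uu with hc1
        by_cases h0 : c0 = 0
        · refine ⟨c1, ?_, horth e1⟩
          intro h1
          rw [hc0, sub_eq_zero] at h0
          rw [hc1, sub_eq_zero] at h1
          have q0 := congrFun h0 ⟨0, by omega⟩
          have q1 := congrFun h0 ⟨1, by omega⟩
          have q2 := congrFun h1 ⟨1, by omega⟩
          have hne01 : (⟨1, by omega⟩ : Fin n) ≠ ⟨0, by omega⟩ := by simp [Fin.ext_iff]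
          rw [he0] at q0 q1
          rw [he1] at q2
          rw [Pi.single_eq_same] at q0
          rw [Pi.single_eq_of_ne hne01] at q1
          rw [Pi.single_eq_same] at q2
          simp only [Pi.smul_apply, smul_eq_mul] at q0 q1 q2
          have hk0 : (uu ⬝ᵥ B.mulVec e0)/rr ≠ 0 := by
            intro hz
            rw [hz] at q0
            simp at q0
          have huu1 : uu ⟨1, by omega⟩ = 0 := by
            rcases mul_eq_zero.mp q1.symm with hc | hc
            · exact absurd hc hk0
            · exact hc
          rw [huu1, mul_zero] at q2
          exact one_ne_zero q2
        · exact ⟨c0, h0, horth e0⟩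
      have hrp : 0 < cand ⬝ᵥ B.mulVec cand := posdef_pos hB hcne
      obtain ⟨sc, hsc⟩ : ∃ c : ℝ, c = Real.sqrt (rr/(cand ⬝ᵥ B.mulVec cand)) := ⟨_, rfl⟩
      have hscsq : sc^2 = rr/(cand ⬝ᵥ B.mulVec cand) := by
        rw [hsc]; exact Real.sq_sqrt (div_nonneg hrrpos.le hrp.le)
      apply ivt (sc • cand) Real.pi
      · simp only [mulVec_smul, dotProduct_smul, smul_dotProduct, smul_eq_mul]
        rw [show sc * (sc * (cand ⬝ᵥ B.mulVec cand)) = sc^2 * (cand ⬝ᵥ B.mulVec cand) by ring,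
          hscsq]
        field_simp
      · simp only [mulVec_smul, dotProduct_smul, smul_eq_mul]
        rw [hcorth, mul_zero]
      · exact Real.pi_pos.le
      · have h2 : z - o = (-1:ℝ) • uu := by rw [← hvvd, hvmm, h]
        have hz' : z = o + (-1:ℝ) • uu := sub_eq_iff_eq_add'.mp h2
        rw [Real.cos_pi, Real.sin_pi, zero_smul, add_zero, hz']
  · -- main case : up' ≠ 0
    have hrp : 0 < up' ⬝ᵥ B.mulVec up' := posdef_pos hB hup0
    have hvvdec' : vv = mm • uu + (1:ℝ) • up' := by rw [hvvdec]; module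
    have hdecomp : rr = mm^2 * rr + (up' ⬝ᵥ B.mulVec up') := by
      have h' := hvv
      rw [hvvdec', qexp2 hsB, huu, huv'] at h'
      linarith
    have hm2lt : mm^2 < 1 := by nlinarith
    obtain ⟨sc, hsc⟩ : ∃ c : ℝ, c = Real.sqrt (rr/(up' ⬝ᵥ B.mulVec up')) := ⟨_, rfl⟩
    have hscsq : sc^2 = rr/(up' ⬝ᵥ B.mulVec up') := by
      rw [hsc]; exact Real.sq_sqrt (div_nonneg hrrpos.le hrp.le)
    have hscnn : 0 ≤ sc := hsc ▸ Real.sqrt_nonneg _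
    apply ivt (sc • up') (Real.arccos mm)
    · simp only [mulVec_smul, dotProduct_smul, smul_dotProduct, smul_eq_mul]
      rw [show sc * (sc * (up' ⬝ᵥ B.mulVec up')) = sc^2 * (up' ⬝ᵥ B.mulVec up') by ring, hscsq]
      field_simp
    · simp only [mulVec_smul, dotProduct_smul, smul_eq_mul]
      rw [huv', mul_zero]
    · exact Real.arccos_nonneg mm
    · have hmabs := abs_lt.mp ((sq_lt_one_iff_abs_lt_one mm).mp hm2lt)
      rw [Real.cos_arccos hmabs.1.le hmabs.2.le, Real.sin_arccos]
      have hcoef : Real.sqrt (1 - mm^2) * sc = 1 := by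
        have h1m : 1 - mm^2 = (up' ⬝ᵥ B.mulVec up')/rr := by
          field_simp
          linarith
        rw [h1m, hsc, ← Real.sqrt_mul (div_nonneg hrp.le hrrpos.le),
          show (up' ⬝ᵥ B.mulVec up')/rr * (rr/(up' ⬝ᵥ B.mulVec up')) = 1 by field_simp,
          Real.sqrt_one]
      rw [smul_smul, hcoef, one_smul]
      have hz' : z = o + vv := sub_eq_iff_eq_add'.mp hvvd.symm
      rw [hz', hvvdec']
      module
end


theorem ellipsoids_no_transversal_intersection {n : ℕ} (hn : 2 ≤ n)
    (A1 A2 : Matrix (Fin n) (Fin n) ℝ) (b1 b2 : Fin n → ℝ) (c1 c2 : ℝ)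
    (hA1 : A1.PosDef) (hA2 : A2.PosDef)
    (E D : Set (Fin n → ℝ))
    (hE : E = {x | x ⬝ᵥ A1.mulVec x + b1 ⬝ᵥ x + c1 < 0})
    (hD : D = {x | x ⬝ᵥ A2.mulVec x + b2 ⬝ᵥ x + c2 < 0})
    (hEne : E.Nonempty) (hDne : D.Nonempty)
    (htrans : ∀ x : Fin n → ℝ, x ⬝ᵥ A1.mulVec x + b1 ⬝ᵥ x + c1 = 0 →
      x ⬝ᵥ A2.mulVec x + b2 ⬝ᵥ x + c2 = 0 →
      ¬ LinearIndependent ℝ ![(2 : ℝ) • A1.mulVec x + b1, (2 : ℝ) • A2.mulVec x + b2])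
    (hint : (E ∩ D).Nonempty) :
    E ⊆ D ∨ D ⊆ E := by
  classical
  by_contra hcon
  push_neg at hcon
  obtain ⟨hED, hDE⟩ := hcon
  rw [Set.not_subset] at hED hDE
  obtain ⟨xa, hxaE, hxaD⟩ := hED
  obtain ⟨xb, hxbD, hxbE⟩ := hDE
  obtain ⟨xc, hxcE, hxcD⟩ := hint
  subst hE hD
  simp only [Set.mem_setOf_eq, not_lt] at hxaE hxaD hxbD hxbE hxcE hxcD
  have hsA1 := posdef_symm hA1
  have hsA2 := posdef_symm hA2
  -- Step 1a : a point on ∂D inside E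
  obtain ⟨xh, hxh2, hxh1⟩ := exists_edge_point hA1 hA2 b1 b2 c1 c2 hxcE hxcD hxaE hxaD
  -- center of D
  set o : Fin n → ℝ := (-(1/2:ℝ)) • (A2⁻¹.mulVec b2) with hod
  have ho : (2:ℝ) • A2.mulVec o + b2 = 0 := by
    have h1 : A2.mulVec (A2⁻¹.mulVec b2) = b2 := by
      rw [mulVec_mulVec, Matrix.mul_nonsing_inv A2 hA2.det_pos.ne'.isUnit, one_mulVec]
    rw [hod, mulVec_smul, h1]
    module
  have hQo : o ⬝ᵥ A2.mulVec o + b2 ⬝ᵥ o + c2 < 0 := by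
    have := quad_eval hsA2 b2 c2 o xc
    rw [ho, zero_dotProduct] at this
    have hq := posdef_nonneg hA2 (xc - o)
    linarith
  -- Step 1b : a point on ∂D with P ≥ 0
  obtain ⟨zh, hzh2, hzh1⟩ := exists_outer_point hA1 hA2 b1 b2 c1 c2
    (by omega : 0 < n) ho hxbD hxbE
  -- Step 1c : common boundary point
  obtain ⟨w, hw1, hw2⟩ := exists_common_zero hA1 hA2 b1 b2 c1 c2 hn ho hQo hxh2 hxh1 hzh2 hzh1
  -- tangency at w
  obtain ⟨l, hlpos, hl⟩ := tangent_l hA1 hA2 b1 b2 c1 c2 hw1 hw2 hxcE hxcD (htrans w hw1 hw2)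
  have hId := key_identity hsA1 hsA2 b1 b2 c1 c2 w l hw1 hw2 hl
  set M : Matrix (Fin n) (Fin n) ℝ := A1 - l • A2 with hMd
  have hMsym : Mᵀ = M := by rw [hMd, transpose_sub, transpose_smul, hsA1, hsA2]
  by_cases hpsd : ∀ y, 0 ≤ y ⬝ᵥ M.mulVec y
  · -- then E ⊆ D, contradicting xa
    have h1 := hId xa
    have h2 := hpsd (xa - w)
    nlinarith
  by_cases hnsd : ∀ y, y ⬝ᵥ M.mulVec y ≤ 0
  · -- then D ⊆ E, contradicting xb
    have h1 := hId xb
    have h2 := hnsd (xb - w)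
    nlinarith
  push_neg at hpsd hnsd
  obtain ⟨um, hum⟩ := hpsd
  obtain ⟨up, hup⟩ := hnsd
  -- M is indefinite: derive a contradiction
  have hgQw : (2:ℝ) • A2.mulVec w + b2 ≠ 0 := grad_ne hA2 b2 c2 hxcD hw2
  obtain ⟨t0, ht0q, ht0M, ht0h⟩ := find_t0 hMsym hup hum hgQw
  have ht0ne : t0 ≠ 0 := by
    intro h
    rw [h, mulVec_zero] at ht0M
    exact ht0M rfl
  have hρ : 0 < t0 ⬝ᵥ A2.mulVec t0 := posdef_pos hA2 ht0ne
  obtain ⟨ss, hss⟩ : ∃ c : ℝ,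
      c = -((((2:ℝ) • A2.mulVec w + b2) ⬝ᵥ t0))/(t0 ⬝ᵥ A2.mulVec t0) := ⟨_, rfl⟩
  have hssne : ss ≠ 0 := by
    rw [hss]
    exact div_ne_zero (neg_ne_zero.mpr ht0h) hρ.ne'
  set p : Fin n → ℝ := w + ss • t0 with hpd
  have hQp : p ⬝ᵥ A2.mulVec p + b2 ⬝ᵥ p + c2 = 0 := by
    rw [hpd, line_eval hsA2 b2 c2 w t0 ss, hw2, hss]
    field_simp
    ring
  have hpw : p - w = ss • t0 := by rw [hpd]; module
  have hqMpw : (p - w) ⬝ᵥ M.mulVec (p - w) = 0 := by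
    rw [hpw]
    simp only [mulVec_smul, dotProduct_smul, smul_dotProduct, smul_eq_mul]
    rw [ht0q]
    ring
  have hPp : p ⬝ᵥ A1.mulVec p + b1 ⬝ᵥ p + c1 = 0 := by
    have := hId p
    rw [hqMpw, hQp] at this
    linarith
  -- tangency at p
  obtain ⟨l', hl'pos, hl'⟩ := tangent_l hA1 hA2 b1 b2 c1 c2 hPp hQp hxcE hxcD (htrans p hPp hQp)
  have hId' := key_identity hsA1 hsA2 b1 b2 c1 c2 p l' hPp hQp hl'
  -- l' = l
  have hwp : w - p = (-ss) • t0 := by rw [hpd]; module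
  have ht0A1 : t0 ⬝ᵥ A1.mulVec t0 = l * (t0 ⬝ᵥ A2.mulVec t0) := by
    have : t0 ⬝ᵥ M.mulVec t0 = t0 ⬝ᵥ A1.mulVec t0 - l * (t0 ⬝ᵥ A2.mulVec t0) := by
      rw [hMd, sub_mulVec, smul_mulVec, dotProduct_sub, dotProduct_smul, smul_eq_mul]
    rw [ht0q] at this
    linarith
  have hll' : l' = l := by
    have e := hId' w
    rw [hw1, hw2] at e
    have e2 : (w - p) ⬝ᵥ (A1 - l' • A2).mulVec (w - p)
        = ss^2 * (t0 ⬝ᵥ A1.mulVec t0) - l' * (ss^2 * (t0 ⬝ᵥ A2.mulVec t0)) := by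
      rw [hwp, sub_mulVec, smul_mulVec]
      simp only [mulVec_smul, dotProduct_sub, dotProduct_smul, smul_dotProduct, smul_eq_mul]
      ring
    rw [e2, ht0A1] at e
    have hss2 : 0 < ss^2 := by positivity
    have hzero : ss^2 * (t0 ⬝ᵥ A2.mulVec t0) * (l - l') = 0 := by
      linear_combination (-1 : ℝ) * e
    rcases mul_eq_zero.mp hzero with h | h
    · exact absurd h (mul_pos hss2 hρ).ne'
    · linarith
  -- final contradiction
  set g : Fin n → ℝ := M.mulVec t0 with hgd
  have e1 := hId (w + g)
  have e2 := hId' (w + g)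
  rw [hll'] at e2
  rw [show w + g - w = g by module] at e1
  have hx_p : w + g - p = (-ss) • t0 + g := by rw [hpd]; module
  rw [hx_p] at e2
  have e3 : ((-ss) • t0 + g) ⬝ᵥ M.mulVec ((-ss) • t0 + g)
      = (-ss)^2 * (t0 ⬝ᵥ M.mulVec t0) + 2*(-ss)*(t0 ⬝ᵥ M.mulVec g) + g ⬝ᵥ M.mulVec g := by
    have := qexp2 hMsym (-ss) 1 t0 g
    rw [one_smul] at this
    rw [this]
    ring
  rw [e3, ht0q] at e2
  have e4 : t0 ⬝ᵥ M.mulVec g = g ⬝ᵥ g := by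
    rw [dps hMsym t0 g, hgd]
  rw [e4] at e2
  have hgg : g ⬝ᵥ g = 0 := by
    have h1 := e1.symm.trans e2
    have h2 : 2 * ss * (g ⬝ᵥ g) = 0 := by linear_combination h1
    rcases mul_eq_zero.mp h2 with h | h
    · exfalso; apply hssne; linarith
    · exact h
  exact ht0M (dotProduct_self_eq_zero.mp hgg)
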